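/- Let X be an L-linearly connected metric space (every two points x,y lie in a compact connected set of diameter at most L·d(x,y)) satisfying the following discrete chain condition for some μ ≥ 1: for all p ∈ X, r ∈ (0, diam X], and x, y in the annulus A(p, r, 2r), there is a finite set P = {x₀ = x, x₁, ..., xₙ = y} ⊆ A(p, r/μ, 2μr) with d(xᵢ, xᵢ₊₁) ≤ (1/2L)·dist(P, p) for each i. Then X is 2μ-annularly linearly connected: for all p ∈ X and r ∈ (0, diam X], any two points x, y ∈ A(p, r, 2r) can be joined by a continuum in A(p, r/2μ, 3μr). -/

import Mathlib

open Metric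

/-- The closed annulus `A(p,r,R) = {z : r ≤ d(z,p) ≤ R}`. -/
def Annulus {X : Type*} [MetricSpace X] (p : X) (r R : ℝ) : Set X :=
  {z | r ≤ dist z p ∧ dist z p ≤ R}

/-- `X` is `L`-linearly connected: any two points lie in a compact connected set of
diameter at most `L` times their distance. -/
def LinearlyConnected (L : ℝ) (X : Type*) [MetricSpace X] : Prop :=
  ∀ x y : X, ∃ K : Set X, IsCompact K ∧ IsConnected K ∧ x ∈ K ∧ y ∈ K ∧
    diam K ≤ L * dist x y

lemma chain_union_connected {X : Type*} [MetricSpace X] :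
    ∀ (n : ℕ) (z : Fin (n + 1) → X) (K : Fin n → Set X),
      (∀ i, IsCompact (K i)) → (∀ i, IsConnected (K i)) →
      (∀ i : Fin n, z i.castSucc ∈ K i) → (∀ i : Fin n, z i.succ ∈ K i) →
      ∃ C : Set X, IsCompact C ∧ IsConnected C ∧ z 0 ∈ C ∧ z (Fin.last n) ∈ C ∧
        C ⊆ {z 0} ∪ ⋃ i, K i := by
  intro n
  induction n with
  | zero =>
    intro z K _ _ _ _
    exact ⟨{z 0}, isCompact_singleton, isConnected_singleton, rfl,
      by simp [Fin.last], Set.subset_union_left⟩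
  | succ n ih =>
    intro z K hc hconn h1 h2
    obtain ⟨C, hCc, hCconn, h0, hlast, hsub⟩ :=
      ih (z ∘ Fin.castSucc) (K ∘ Fin.castSucc) (fun i => hc _) (fun i => hconn _)
        (fun i => h1 i.castSucc)
        (fun i => by
          have := h2 i.castSucc
          rw [Fin.succ_castSucc] at this; exact this)
    refine ⟨C ∪ K (Fin.last n), hCc.union (hc _), ?_, Or.inl h0, Or.inr ?_, ?_⟩
    · refine IsConnected.union ⟨z (Fin.last n).castSucc, ?_, h1 (Fin.last n)⟩ hCconn
        (hconn _)
      exact hlast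
    · have : (Fin.last n).succ = Fin.last (n + 1) := Fin.succ_last n
      rw [← this]; exact h2 (Fin.last n)
    · rintro w (hw | hw)
      · rcases hsub hw with hw | hw
        · left; simpa [Function.comp] using hw
        · right
          simp only [Set.mem_iUnion, Function.comp] at hw ⊢
          obtain ⟨i, hi⟩ := hw
          exact ⟨i.castSucc, hi⟩
      · right; exact Set.mem_iUnion.2 ⟨Fin.last n, hw⟩

/-- A linearly connected space satisfying a discrete chain condition in annuli is
annularly linearly connected. -/
theorem stmt10 {X : Type*} [MetricSpace X]
    (L μ : ℝ) (hL : 1 ≤ L) (hμ : 1 ≤ μ)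
    (hlc : LinearlyConnected L X)
    (hchain : ∀ (p : X) (r : ℝ), 0 < r →
      ENNReal.ofReal r ≤ EMetric.diam (Set.univ : Set X) →
      ∀ x ∈ Annulus p r (2 * r), ∀ y ∈ Annulus p r (2 * r),
        ∃ (n : ℕ) (z : Fin (n + 1) → X),
          z 0 = x ∧ z (Fin.last n) = y ∧
          (∀ i, z i ∈ Annulus p (r / μ) (2 * μ * r)) ∧
          ∀ i : Fin n, dist (z i.castSucc) (z i.succ) ≤
            (1 / (2 * L)) * Metric.infDist p (Set.range z)) :
    ∀ (p : X) (r : ℝ), 0 < r →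
      ENNReal.ofReal r ≤ EMetric.diam (Set.univ : Set X) →
      ∀ x ∈ Annulus p r (2 * r), ∀ y ∈ Annulus p r (2 * r),
        ∃ C : Set X, IsCompact C ∧ IsConnected C ∧ x ∈ C ∧ y ∈ C ∧
          C ⊆ Annulus p (r / (2 * μ)) (3 * μ * r) := by
  intro p r hr hdiam x hx y hy
  obtain ⟨n, z, hz0, hzl, hzmem, hzd⟩ := hchain p r hr hdiam x hx y hy
  set d : ℝ := Metric.infDist p (Set.range z) with hd
  have hL0 : (0:ℝ) < L := lt_of_lt_of_le one_pos hL
  have hμ0 : (0:ℝ) < μ := lt_of_lt_of_le one_pos hμ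
  -- lower bound on d
  have hdr : r / μ ≤ d := by
    by_contra h
    push_neg at h
    obtain ⟨w, ⟨j, rfl⟩, hwd⟩ :=
      (Metric.infDist_lt_iff (⟨z 0, Set.mem_range_self 0⟩ : (Set.range z).Nonempty)).1 h
    rw [dist_comm] at hwd
    exact absurd (hzmem j).1 (not_le.2 hwd)
  have hdub : d ≤ 2 * μ * r := by
    have h1 : d ≤ dist p (z 0) := Metric.infDist_le_dist_of_mem (Set.mem_range_self 0)
    have h2 := (hzmem 0).2
    rw [dist_comm] at h1
    linarith
  have hd0 : 0 < d := lt_of_lt_of_le (by positivity) hdr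
  have hkey : r / (2 * μ) = (r / μ) / 2 := by
    rw [div_div, mul_comm]
  -- build the connected sets
  choose K hKc hKconn hK1 hK2 hKd using fun i : Fin n => hlc (z i.castSucc) (z i.succ)
  obtain ⟨C, hCc, hCconn, h0, hlast, hsub⟩ :=
    chain_union_connected n z K hKc hKconn hK1 hK2
  refine ⟨C, hCc, hCconn, hz0 ▸ h0, hzl ▸ hlast, ?_⟩
  intro w hw
  -- any z j is in the target annulus
  have hzann : ∀ j, z j ∈ Annulus p (r / (2 * μ)) (3 * μ * r) := by
    intro j
    obtain ⟨hj1, hj2⟩ := hzmem j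
    constructor
    · have : r / (2 * μ) ≤ r / μ := by rw [hkey]; linarith [div_pos hr hμ0]
      linarith
    · nlinarith
  rcases hsub hw with hw | hw
  · rw [Set.mem_singleton_iff] at hw
    rw [hw]; exact hzann 0
  · obtain ⟨s, ⟨i, rfl⟩, hws⟩ := hw
    -- w is within d/2 of z i.castSucc
    have hdw : dist w (z i.castSucc) ≤ d / 2 := by
      have h1 : dist w (z i.castSucc) ≤ diam (K i) :=
        dist_le_diam_of_mem (hKc i).isBounded hws (hK1 i)
      have h2 := hKd i
      have h3 := hzd i
      have h4 : L * ((1 / (2 * L)) * d) = d / 2 := by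
        field_simp
      nlinarith
    have hzi := hzmem i.castSucc
    have hdz : d ≤ dist (z i.castSucc) p := by
      have : infDist p (Set.range z) ≤ dist p (z i.castSucc) :=
        Metric.infDist_le_dist_of_mem (Set.mem_range_self i.castSucc)
      rwa [dist_comm] at this
    constructor
    · have htri : dist (z i.castSucc) p ≤ dist (z i.castSucc) w + dist w p :=
        dist_triangle _ _ _
      rw [dist_comm (z i.castSucc) w] at htri
      have : r / (2 * μ) ≤ d / 2 := by rw [hkey]; linarith
      linarith
    · have htri : dist w p ≤ dist w (z i.castSucc) + dist (z i.castSucc) p :=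
        dist_triangle _ _ _
      have := hzi.2
      nlinarith
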